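/- Let N = 2^n. For every graph G ⊆ [N] × [N], ρ_ultra(G, 𝓖_{N,N}) ≤ ρ_ultra(φ(G), 𝓑_{2n}); that is, the conondeterministic cover complexity of G with respect to the graph-complexity generators is at most the conondeterministic cover complexity of the associated Boolean function f_G with respect to the circuit-complexity generators. -/
import Mathlib


open Set Filter

section Defs

variable {Γ : Type*}

/-- `StepOK 𝓑 seq ops` says that each set `seq i` in the sequence is obtained as the
union or intersection (according to `ops i`) of two sets, each of which is either a
generator in `𝓑` or an earlier set of the sequence. -/
def StepOK (𝓑 : Set (Set Γ)) {t : ℕ} (seq : Fin t → Set Γ) (ops : Fin t → Bool) : Prop :=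
  ∀ i : Fin t, ∃ X Y : Set Γ,
    (X ∈ 𝓑 ∨ ∃ j : Fin t, j < i ∧ X = seq j) ∧
    (Y ∈ 𝓑 ∨ ∃ j : Fin t, j < i ∧ Y = seq j) ∧
    seq i = if ops i = true then X ∩ Y else X ∪ Y

/-- The number of intersection operations used in the sequence. -/
def interCount {t : ℕ} (ops : Fin t → Bool) : ℕ :=
  (Finset.univ.filter fun i => ops i = true).card

/-- The number of union operations used in the sequence. -/
def unionCount {t : ℕ} (ops : Fin t → Bool) : ℕ :=
  (Finset.univ.filter fun i => ops i = false).card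

/-- The discrete complexity `D(A | 𝓑)`: the minimum length of a sequence generating
`A` from `𝓑` (`⊤` if none exists). -/
noncomputable def Dtot (A : Set Γ) (𝓑 : Set (Set Γ)) : ℕ∞ :=
  sInf {m : ℕ∞ | ∃ (t : ℕ) (seq : Fin (t + 1) → Set Γ) (ops : Fin (t + 1) → Bool),
    StepOK 𝓑 seq ops ∧ seq (Fin.last t) = A ∧ m = ((t + 1 : ℕ) : ℕ∞)}

/-- The intersection complexity `D_∩(A | 𝓑)`: the minimum number of intersection
operations over all sequences generating `A` from `𝓑`. -/
noncomputable def Dcap (A : Set Γ) (𝓑 : Set (Set Γ)) : ℕ∞ :=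
  sInf {m : ℕ∞ | ∃ (t : ℕ) (seq : Fin (t + 1) → Set Γ) (ops : Fin (t + 1) → Bool),
    StepOK 𝓑 seq ops ∧ seq (Fin.last t) = A ∧ m = ((interCount ops : ℕ) : ℕ∞)}

/-- The union complexity `D_∪(A | 𝓑)`. -/
noncomputable def Dcup (A : Set Γ) (𝓑 : Set (Set Γ)) : ℕ∞ :=
  sInf {m : ℕ∞ | ∃ (t : ℕ) (seq : Fin (t + 1) → Set Γ) (ops : Fin (t + 1) → Bool),
    StepOK 𝓑 seq ops ∧ seq (Fin.last t) = A ∧ m = ((unionCount ops : ℕ) : ℕ∞)}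

/-- Simultaneous discrete complexity `D(A_1, …, A_ℓ | 𝓑)` of generating every set in
the family `As` from `𝓑`. -/
noncomputable def DtotSim (As : Set (Set Γ)) (𝓑 : Set (Set Γ)) : ℕ∞ :=
  sInf {m : ℕ∞ | ∃ (t : ℕ) (seq : Fin (t + 1) → Set Γ) (ops : Fin (t + 1) → Bool),
    StepOK 𝓑 seq ops ∧ (∀ A ∈ As, ∃ i, seq i = A) ∧ m = ((t + 1 : ℕ) : ℕ∞)}

/-- Simultaneous intersection complexity. -/
noncomputable def DcapSim (As : Set (Set Γ)) (𝓑 : Set (Set Γ)) : ℕ∞ :=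
  sInf {m : ℕ∞ | ∃ (t : ℕ) (seq : Fin (t + 1) → Set Γ) (ops : Fin (t + 1) → Bool),
    StepOK 𝓑 seq ops ∧ (∀ A ∈ As, ∃ i, seq i = A) ∧ m = ((interCount ops : ℕ) : ℕ∞)}

/-- Simultaneous union complexity. -/
noncomputable def DcupSim (As : Set (Set Γ)) (𝓑 : Set (Set Γ)) : ℕ∞ :=
  sInf {m : ℕ∞ | ∃ (t : ℕ) (seq : Fin (t + 1) → Set Γ) (ops : Fin (t + 1) → Bool),
    StepOK 𝓑 seq ops ∧ (∀ A ∈ As, ∃ i, seq i = A) ∧ m = ((unionCount ops : ℕ) : ℕ∞)}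

/-- A semi-filter over `U`: a nonempty, upward-closed (within `U`) family of subsets
of `U` not containing `∅`. -/
def SemiFilter (U : Set Γ) (F : Set (Set Γ)) : Prop :=
  F.Nonempty ∧ (∀ S ∈ F, S ⊆ U) ∧
    (∀ S ∈ F, ∀ T : Set Γ, S ⊆ T → T ⊆ U → T ∈ F) ∧ ∅ ∉ F

/-- `F` is above the element `w` with respect to `𝓑` and `U`. -/
def Above (𝓑 : Set (Set Γ)) (U : Set Γ) (F : Set (Set Γ)) (w : Γ) : Prop :=
  ∀ B ∈ 𝓑, w ∈ B → B ∩ U ∈ F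

/-- `F` preserves the pair `p = (E, H)`. -/
def PreservesPair (F : Set (Set Γ)) (p : Set Γ × Set Γ) : Prop :=
  p.1 ∈ F → p.2 ∈ F → p.1 ∩ p.2 ∈ F

/-- `Λ` is a family of pairs of subsets of `U = Aᶜ` such that no semi-filter over `U`
both preserves `Λ` and is above some element of `A`. -/
def Covers (A : Set Γ) (𝓑 : Set (Set Γ)) (Λ : Finset (Set Γ × Set Γ)) : Prop :=
  (∀ p ∈ Λ, p.1 ⊆ Aᶜ ∧ p.2 ⊆ Aᶜ) ∧
    ¬∃ (F : Set (Set Γ)) (a : Γ), SemiFilter Aᶜ F ∧ a ∈ A ∧ Above 𝓑 Aᶜ F a ∧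
      ∀ p ∈ Λ, PreservesPair F p

/-- The cover complexity `ρ(A, 𝓑)`. -/
noncomputable def rho (A : Set Γ) (𝓑 : Set (Set Γ)) : ℕ∞ :=
  sInf {m : ℕ∞ | ∃ Λ : Finset (Set Γ × Set Γ), Covers A 𝓑 Λ ∧ m = ((Λ.card : ℕ) : ℕ∞)}

/-- A semi-ultra-filter over `U`: a semi-filter containing, for every `A' ⊆ U`, at
least one of `A'` and `U \ A'`. -/
def SemiUltraFilter (U : Set Γ) (F : Set (Set Γ)) : Prop :=
  SemiFilter U F ∧ ∀ A' : Set Γ, A' ⊆ U → (A' ∈ F ∨ U \ A' ∈ F)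

/-- The conondeterministic cover complexity `ρ_ultra(A, 𝓑)`. -/
noncomputable def rhoUltra (A : Set Γ) (𝓑 : Set (Set Γ)) : ℕ∞ :=
  sInf {m : ℕ∞ | ∃ Λ : Finset (Set Γ × Set Γ),
    (∀ p ∈ Λ, p.1 ⊆ Aᶜ ∧ p.2 ⊆ Aᶜ) ∧
    (¬∃ (F : Set (Set Γ)) (a : Γ), SemiUltraFilter Aᶜ F ∧ a ∈ A ∧ Above 𝓑 Aᶜ F a ∧
      ∀ p ∈ Λ, PreservesPair F p) ∧
    m = ((Λ.card : ℕ) : ℕ∞)}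

/-- One step of the evaluation of a syntactic (possibly cyclic) sequence: an argument
is either a reference to a member of the sequence or a fixed generator set. -/
def cycEval {t : ℕ} (arg1 arg2 : Fin t → Fin t ⊕ Set Γ) (ops : Fin t → Bool) :
    ℕ → Fin t → Set Γ
  | 0 => fun _ => ∅
  | j + 1 => fun i =>
      cycEval arg1 arg2 ops j i ∪
        (if ops i = true then
          Sum.elim (cycEval arg1 arg2 ops j) id (arg1 i) ∩
            Sum.elim (cycEval arg1 arg2 ops j) id (arg2 i)
        else
          Sum.elim (cycEval arg1 arg2 ops j) id (arg1 i) ∪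
            Sum.elim (cycEval arg1 arg2 ops j) id (arg2 i))

/-- The fixed set arguments of a syntactic sequence must be generators from `𝓑`. -/
def ArgsOK (𝓑 : Set (Set Γ)) {t : ℕ} (arg1 arg2 : Fin t → Fin t ⊕ Set Γ) : Prop :=
  ∀ i : Fin t, (∀ B : Set Γ, arg1 i = Sum.inr B → B ∈ 𝓑) ∧
    (∀ B : Set Γ, arg2 i = Sum.inr B → B ∈ 𝓑)

/-- The cyclic intersection complexity `D°_∩(A | 𝓑)`: the minimum number of
intersection operations over all syntactic sequences generating `A` from `𝓑`. -/
noncomputable def DcapCyc (A : Set Γ) (𝓑 : Set (Set Γ)) : ℕ∞ :=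
  sInf {m : ℕ∞ | ∃ (t : ℕ) (arg1 arg2 : Fin (t + 1) → Fin (t + 1) ⊕ Set Γ)
      (ops : Fin (t + 1) → Bool),
    ArgsOK 𝓑 arg1 arg2 ∧
    (∃ j : ℕ, ∀ j' ≥ j, cycEval arg1 arg2 ops j' (Fin.last t) = A) ∧
    m = ((interCount ops : ℕ) : ℕ∞)}

end Defs

/-- The row star `R_i ⊆ [N] × [M]`. -/
def rowSet (N M : ℕ) (i : Fin N) : Set (Fin N × Fin M) := {p | p.1 = i}

/-- The column star `C_j ⊆ [N] × [M]`. -/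
def colSet (N M : ℕ) (j : Fin M) : Set (Fin N × Fin M) := {p | p.2 = j}

/-- The generators `𝓖_{N,M}` of graph complexity: all row stars and column stars. -/
def graphGens (N M : ℕ) : Set (Set (Fin N × Fin M)) :=
  Set.range (rowSet N M) ∪ Set.range (colSet N M)

/-- The generators `𝓑_m` of Boolean circuit complexity over `{0,1}^m`:
all sets `B_i = {v : v_i = 1}` and their complements. -/
def cubeGens (m : ℕ) : Set (Set (Fin m → Bool)) :=
  {S | ∃ i : Fin m, S = {v | v i = true} ∨ S = {v | v i = false}}

/-- `bin : [N] → {0,1}^n` for `N = 2^n`: the element `k` (representing the integer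
`k + 1`) maps to the string `w` with `num(w) = k`, i.e. position `j` holds bit
`n - 1 - j` of `k`. -/
def binMap (n : ℕ) (k : Fin (2 ^ n)) : Fin n → Bool :=
  fun j => (k : ℕ).testBit (n - 1 - (j : ℕ))

/-- The bijection `φ : [N] × [N] → {0,1}^{2n}`, `φ(u, v) = bin(u)bin(v)`. -/
def phi (n : ℕ) (p : Fin (2 ^ n) × Fin (2 ^ n)) : Fin (2 * n) → Bool :=
  fun j =>
    if h : (j : ℕ) < n then binMap n p.1 ⟨(j : ℕ), h⟩
    else binMap n p.2 ⟨(j : ℕ) - n, by have := j.isLt; omega⟩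

/-- The canonical family `𝓕_e` for an edge `e = (u, v)` of a graph `G`:
all `W ⊆ Ḡ` containing `R_u ∩ Ḡ` or `C_v ∩ Ḡ`. -/
def canonFam (N : ℕ) (G : Set (Fin N × Fin N)) (e : Fin N × Fin N) :
    Set (Set (Fin N × Fin N)) :=
  {W | W ⊆ Gᶜ ∧ (rowSet N N e.1 ∩ Gᶜ ⊆ W ∨ colSet N N e.2 ∩ Gᶜ ⊆ W)}

/-- The canonical cover complexity `ρ_can(G, 𝓖_{N,N})`: the minimum size of a family
`Λ` of pairs of subsets of `Ḡ` such that every canonical semi-filter `𝓕_e`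
(for `e ∈ G`, when it is a semi-filter) fails to preserve some pair in `Λ`. -/
noncomputable def rhoCan (N : ℕ) (G : Set (Fin N × Fin N)) : ℕ∞ :=
  sInf {m : ℕ∞ | ∃ Λ : Finset (Set (Fin N × Fin N) × Set (Fin N × Fin N)),
    (∀ p ∈ Λ, p.1 ⊆ Gᶜ ∧ p.2 ⊆ Gᶜ) ∧
    (∀ e ∈ G, SemiFilter Gᶜ (canonFam N G e) →
      ∃ p ∈ Λ, ¬ PreservesPair (canonFam N G e) p) ∧
    m = ((Λ.card : ℕ) : ℕ∞)}


section Aux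

lemma binMap_injective (n : ℕ) : Function.Injective (binMap n) := by
  intro k k' h
  ext
  apply Nat.eq_of_testBit_eq
  intro i
  by_cases hi : i < n
  · have h2 := congrFun h ⟨n - 1 - i, by omega⟩
    simp only [binMap] at h2
    rwa [show n - 1 - (n - 1 - i) = i by omega] at h2
  · have hk : (k : ℕ) < 2 ^ i := lt_of_lt_of_le k.isLt (Nat.pow_le_pow_right (by norm_num) (by omega))
    have hk' : (k' : ℕ) < 2 ^ i := lt_of_lt_of_le k'.isLt (Nat.pow_le_pow_right (by norm_num) (by omega))
    rw [Nat.testBit_lt_two_pow hk, Nat.testBit_lt_two_pow hk']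

lemma phi_injective (n : ℕ) : Function.Injective (phi n) := by
  intro p q h
  have h1 : p.1 = q.1 := by
    apply binMap_injective n
    funext j
    have h2 := congrFun h ⟨(j : ℕ), by omega⟩
    simp only [phi, dif_pos j.isLt] at h2
    convert h2 using 2 <;> exact (Fin.ext rfl)
  have h2 : p.2 = q.2 := by
    apply binMap_injective n
    funext j
    have h2 := congrFun h ⟨n + (j : ℕ), by omega⟩
    have hn : ¬ (n + (j : ℕ) < n) := by omega
    simp only [phi, dif_neg hn] at h2
    convert h2 using 2 <;> exact (Fin.ext (by simp only [Fin.val_mk]; omega))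
  exact Prod.ext h1 h2

lemma phi_bijective (n : ℕ) : Function.Bijective (phi n) := by
  rw [Fintype.bijective_iff_injective_and_card]
  refine ⟨phi_injective n, ?_⟩
  simp [Fintype.card_fun, two_mul, pow_add]

end Aux

/-- Nondeterministic fusion transference lemma: for `N = 2^n` and
every graph `G ⊆ [N] × [N]`, `ρ_ultra(G, 𝓖_{N,N}) ≤ ρ_ultra(φ(G), 𝓑_{2n})`. -/
theorem nondet_fusion_transference (n : ℕ) (G : Set (Fin (2 ^ n) × Fin (2 ^ n))) :
    rhoUltra G (graphGens (2 ^ n) (2 ^ n)) ≤ rhoUltra (phi n '' G) (cubeGens (2 * n)) := by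
  classical
  have hinj := phi_injective n
  have hbij := phi_bijective n
  apply le_sInf
  rintro m ⟨Λ', hsub', hno', rfl⟩
  have hcompl : phi n ⁻¹' ((phi n '' G)ᶜ) = Gᶜ := by
    ext p
    simp [Set.mem_preimage, hinj.mem_set_image]
  set Λ : Finset (Set (Fin (2 ^ n) × Fin (2 ^ n)) × Set (Fin (2 ^ n) × Fin (2 ^ n))) :=
    Λ'.image (fun p => (phi n ⁻¹' p.1, phi n ⁻¹' p.2)) with hΛ
  have hmem : ((Λ.card : ℕ) : ℕ∞) ∈ {m : ℕ∞ | ∃ Λ : Finset _,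
      (∀ p ∈ Λ, p.1 ⊆ Gᶜ ∧ p.2 ⊆ Gᶜ) ∧
      (¬∃ (F : Set (Set (Fin (2 ^ n) × Fin (2 ^ n)))) (a : Fin (2 ^ n) × Fin (2 ^ n)),
        SemiUltraFilter Gᶜ F ∧ a ∈ G ∧ Above (graphGens (2 ^ n) (2 ^ n)) Gᶜ F a ∧
        ∀ p ∈ Λ, PreservesPair F p) ∧
      m = ((Λ.card : ℕ) : ℕ∞)} := by
    refine ⟨Λ, ?_, ?_, rfl⟩
    · rintro p hp
      simp only [hΛ, Finset.mem_image] at hp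
      obtain ⟨q, hq, rfl⟩ := hp
      obtain ⟨hq1, hq2⟩ := hsub' q hq
      constructor
      · rw [← hcompl]; exact Set.preimage_mono hq1
      · rw [← hcompl]; exact Set.preimage_mono hq2
    · rintro ⟨F, a, ⟨⟨hFne, hFsub, hFup, hFempty⟩, hFultra⟩, haG, habove, hpres⟩
      apply hno'
      refine ⟨{S | phi n ⁻¹' S ∈ F}, phi n a, ⟨⟨?_, ?_, ?_, ?_⟩, ?_⟩, ?_, ?_, ?_⟩
      · -- nonempty
        obtain ⟨W, hW⟩ := hFne
        exact ⟨phi n '' W, by simp only [Set.mem_setOf_eq, Set.preimage_image_eq W hinj]; exact hW⟩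
      · -- subsets
        intro S hS x hx
        obtain ⟨p, rfl⟩ := hbij.2 x
        intro hxG
        obtain ⟨q, hqG, hq⟩ := hxG
        rw [hinj hq] at hqG
        exact hFsub _ hS hx hqG
      · -- upward closed
        intro S hS T hST hT
        refine hFup _ hS _ (Set.preimage_mono hST) ?_
        rw [← hcompl]; exact Set.preimage_mono hT
      · -- empty
        simpa using hFempty
      · -- ultra
        intro A' hA'
        have h1 : phi n ⁻¹' A' ⊆ Gᶜ := by rw [← hcompl]; exact Set.preimage_mono hA'
        rcases hFultra _ h1 with h | h
        · exact Or.inl h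
        · right
          show phi n ⁻¹' ((phi n '' G)ᶜ \ A') ∈ F
          rwa [Set.preimage_diff, hcompl]
      · exact Set.mem_image_of_mem _ haG
      · -- Above
        rintro B ⟨i, hB⟩ haB
        show phi n ⁻¹' (B ∩ (phi n '' G)ᶜ) ∈ F
        rw [Set.preimage_inter, hcompl]
        have hBchar : B = {v | v i = phi n a i} := by
          rcases hB with rfl | rfl
          · have : phi n a i = true := haB
            rw [this]
          · have : phi n a i = false := haB
            rw [this]
        by_cases hi : (i : ℕ) < n
        · have hrow : rowSet (2 ^ n) (2 ^ n) a.1 ∩ Gᶜ ∈ F := by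
            apply habove
            · exact Or.inl ⟨a.1, rfl⟩
            · exact rfl
          refine hFup _ hrow _ ?_ Set.inter_subset_right
          apply Set.inter_subset_inter_left
          intro p hp
          show phi n p ∈ B
          rw [hBchar]
          show phi n p i = phi n a i
          have hp1 : p.1 = a.1 := hp
          simp only [phi, dif_pos hi, hp1]
        · have hcol : colSet (2 ^ n) (2 ^ n) a.2 ∩ Gᶜ ∈ F := by
            apply habove
            · exact Or.inr ⟨a.2, rfl⟩
            · exact rfl
          refine hFup _ hcol _ ?_ Set.inter_subset_right
          apply Set.inter_subset_inter_left
          intro p hp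
          show phi n p ∈ B
          rw [hBchar]
          show phi n p i = phi n a i
          have hp2 : p.2 = a.2 := hp
          simp only [phi, dif_neg hi, hp2]
      · -- preserves pairs
        intro q hq h1 h2
        have hqΛ : (phi n ⁻¹' q.1, phi n ⁻¹' q.2) ∈ Λ := by
          simp only [hΛ, Finset.mem_image]
          exact ⟨q, hq, rfl⟩
        have := hpres _ hqΛ h1 h2
        show phi n ⁻¹' (q.1 ∩ q.2) ∈ F
        rwa [Set.preimage_inter]
  calc rhoUltra G (graphGens (2 ^ n) (2 ^ n)) ≤ ((Λ.card : ℕ) : ℕ∞) := sInf_le hmem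
    _ ≤ ((Λ'.card : ℕ) : ℕ∞) := by rw [hΛ]; exact_mod_cast Finset.card_image_le
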